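/- Partial-trace gluing identity for coherent exponentials: for spinors z, z' ∈ ℂ² and g, h ∈ SU(2), ∫_{ℂ²}∫_{ℂ²} exp([z|g|w₁⟩ + ⟨w₁|w₂] + [w₂|h|z'⟩) dμ(w₁) dμ(w₂) = exp([z|gh|z'⟩), where dμ is the Gaussian measure on ℂ², ⟨w₁|w₂] is the sesquilinear pairing of w₁ with the dual of w₂, and [·|·⟩ is the bilinear spinor bracket. -/

import Mathlib

open ComplexConjugate MeasureTheory

/-- The bilinear spinor bracket `[w|z⟩ = -w¹ z⁰ + w⁰ z¹`. -/
def braket (w z : Fin 2 → ℂ) : ℂ := - w 1 * z 0 + w 0 * z 1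

/-- The Hermitian inner product `⟨w|z⟩`. -/
def herm (w z : Fin 2 → ℂ) : ℂ := conj (w 0) * z 0 + conj (w 1) * z 1

/-- The dual spinor `ς z = (-conj z¹, conj z⁰)`. -/
def dualSpinor (z : Fin 2 → ℂ) : Fin 2 → ℂ := ![-(conj (z 1)), conj (z 0)]

lemma gauss1 (α β : ℂ) :
    ∫ w : ℂ, Complex.exp (-(conj w * w) + (α * conj w + β * w))
      = (Real.pi : ℂ) * Complex.exp (α * β) := by
  rw [← (Complex.volume_preserving_equiv_real_prod.symm
      Complex.measurableEquivRealProd).integral_comp'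
      (fun w : ℂ => Complex.exp (-(conj w * w) + (α * conj w + β * w)))]
  have h1 : ∀ p : ℝ × ℝ,
      Complex.exp (-(conj (Complex.measurableEquivRealProd.symm p) *
          (Complex.measurableEquivRealProd.symm p)) +
        (α * conj (Complex.measurableEquivRealProd.symm p) +
          β * (Complex.measurableEquivRealProd.symm p)))
      = Complex.exp ((-1) * (p.1:ℂ) ^ 2 + (α + β) * (p.1:ℂ) + 0) *
        Complex.exp ((-1) * (p.2:ℂ) ^ 2 + (Complex.I * (β - α)) * (p.2:ℂ) + 0) := by
    intro p
    have hw : (Complex.measurableEquivRealProd.symm p) = (p.1 : ℂ) + (p.2 : ℂ) * Complex.I := by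
      simp [Complex.measurableEquivRealProd_symm_apply, Complex.mk_eq_add_mul_I]
    rw [hw, ← Complex.exp_add]
    congr 1
    simp only [map_add, map_mul, Complex.conj_ofReal, Complex.conj_I]
    linear_combination ((p.2:ℂ))^2 * Complex.I_sq
  simp only [h1]
  rw [MeasureTheory.Measure.volume_eq_prod,
    integral_prod_mul (fun x : ℝ => Complex.exp ((-1) * (x:ℂ) ^ 2 + (α + β) * (x:ℂ) + 0))
      (fun y : ℝ => Complex.exp ((-1) * (y:ℂ) ^ 2 + (Complex.I * (β - α)) * (y:ℂ) + 0))]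
  have hb : (-1 : ℂ).re < 0 := by norm_num
  rw [integral_cexp_quadratic hb, integral_cexp_quadratic hb]
  have hπ : ((Real.pi : ℂ) / -(-1)) = (Real.pi : ℂ) := by norm_num
  rw [hπ]
  have hπne : (Real.pi : ℂ) ≠ 0 := Complex.ofReal_ne_zero.mpr Real.pi_ne_zero
  rw [mul_mul_mul_comm, ← Complex.cpow_add _ _ hπne, ← Complex.exp_add]
  norm_num
  congr 1
  linear_combination ((β-α)^2/4) * Complex.I_sq

lemma gauss2 (a b : Fin 2 → ℂ) :
    ∫ w : Fin 2 → ℂ, Complex.exp ((-(conj (w 0) * w 0) + (a 0 * conj (w 0) + b 0 * w 0)) +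
        (-(conj (w 1) * w 1) + (a 1 * conj (w 1) + b 1 * w 1)))
    = (Real.pi : ℂ) ^ 2 * Complex.exp (a 0 * b 0 + a 1 * b 1) := by
  have h2 := (volume_preserving_finTwoArrow ℂ).integral_comp'
    (fun p : ℂ × ℂ => Complex.exp (-(conj p.1 * p.1) + (a 0 * conj p.1 + b 0 * p.1)) *
      Complex.exp (-(conj p.2 * p.2) + (a 1 * conj p.2 + b 1 * p.2)))
  have h3 : ∫ w : Fin 2 → ℂ, Complex.exp ((-(conj (w 0) * w 0) + (a 0 * conj (w 0) + b 0 * w 0)) +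
        (-(conj (w 1) * w 1) + (a 1 * conj (w 1) + b 1 * w 1)))
      = ∫ w : Fin 2 → ℂ, (fun p : ℂ × ℂ =>
          Complex.exp (-(conj p.1 * p.1) + (a 0 * conj p.1 + b 0 * p.1)) *
          Complex.exp (-(conj p.2 * p.2) + (a 1 * conj p.2 + b 1 * p.2)))
        (MeasurableEquiv.finTwoArrow w) := by
    congr 1
    funext w
    simp [MeasurableEquiv.finTwoArrow, ← Complex.exp_add]
  rw [h3, h2, MeasureTheory.Measure.volume_eq_prod,
    integral_prod_mul (fun x : ℂ => Complex.exp (-(conj x * x) + (a 0 * conj x + b 0 * x)))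
      (fun y : ℂ => Complex.exp (-(conj y * y) + (a 1 * conj y + b 1 * y))),
    gauss1, gauss1, Complex.exp_add]
  ring

/-- the partial-trace gluing identity for coherent exponentials:
for `g, h ∈ SU(2)` and spinors `z, z'`,
`∫∫ exp([z|g|w₁⟩ + ⟨w₁|w₂] + [w₂|h|z'⟩) dμ(w₁) dμ(w₂) = exp([z|gh|z'⟩)`,
with the Gaussian measure `dμ(w) = π⁻² e^{-⟨w|w⟩} d⁴w` on each factor. -/
theorem gluing_gaussian_identity (z z' : Fin 2 → ℂ)
    (g h : Matrix (Fin 2) (Fin 2) ℂ)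
    (hg : g * g.conjTranspose = 1 ∧ g.det = 1)
    (hh : h * h.conjTranspose = 1 ∧ h.det = 1) :
    ∫ w₁ : Fin 2 → ℂ, ∫ w₂ : Fin 2 → ℂ,
      (((Real.pi : ℂ)) ^ 2)⁻¹ * Complex.exp (-herm w₁ w₁) *
        (((Real.pi : ℂ)) ^ 2)⁻¹ * Complex.exp (-herm w₂ w₂) *
        Complex.exp (braket z (g.mulVec w₁) + herm w₁ (dualSpinor w₂) +
          braket w₂ (h.mulVec z'))
    = Complex.exp (braket z ((g * h).mulVec z')) := by
  clear hg hh
  have hπ2 : ((Real.pi : ℂ) ^ 2) ≠ 0 :=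
    pow_ne_zero _ (Complex.ofReal_ne_zero.mpr Real.pi_ne_zero)
  set b0 : ℂ := -z 1 * g 0 0 + z 0 * g 1 0 with hb0
  set b1 : ℂ := -z 1 * g 0 1 + z 0 * g 1 1 with hb1
  have inner : ∀ w₁ : Fin 2 → ℂ,
      (∫ w₂ : Fin 2 → ℂ,
        (((Real.pi : ℂ)) ^ 2)⁻¹ * Complex.exp (-herm w₁ w₁) *
        (((Real.pi : ℂ)) ^ 2)⁻¹ * Complex.exp (-herm w₂ w₂) *
        Complex.exp (braket z (g.mulVec w₁) + herm w₁ (dualSpinor w₂) +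
          braket w₂ (h.mulVec z')))
      = (((Real.pi : ℂ)) ^ 2)⁻¹ * Complex.exp
          ((-(conj (w₁ 0) * w₁ 0) + ((h.mulVec z') 0 * conj (w₁ 0) + b0 * w₁ 0)) +
           (-(conj (w₁ 1) * w₁ 1) + ((h.mulVec z') 1 * conj (w₁ 1) + b1 * w₁ 1))) := by
    intro w₁
    set C : ℂ := (((Real.pi : ℂ)) ^ 2)⁻¹ * Complex.exp (-herm w₁ w₁) *
      Complex.exp (braket z (g.mulVec w₁)) * (((Real.pi : ℂ)) ^ 2)⁻¹ with hC
    have hpt : ∀ w₂ : Fin 2 → ℂ,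
        (((Real.pi : ℂ)) ^ 2)⁻¹ * Complex.exp (-herm w₁ w₁) *
        (((Real.pi : ℂ)) ^ 2)⁻¹ * Complex.exp (-herm w₂ w₂) *
        Complex.exp (braket z (g.mulVec w₁) + herm w₁ (dualSpinor w₂) +
          braket w₂ (h.mulVec z'))
        = C * Complex.exp
            ((-(conj (w₂ 0) * w₂ 0) + (conj (w₁ 1) * conj (w₂ 0) + (h.mulVec z') 1 * w₂ 0)) +
             (-(conj (w₂ 1) * w₂ 1) +
               (-(conj (w₁ 0)) * conj (w₂ 1) + -((h.mulVec z') 0) * w₂ 1))) := by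
      intro w₂
      have e1 : braket z (g.mulVec w₁) + herm w₁ (dualSpinor w₂) + braket w₂ (h.mulVec z')
          = braket z (g.mulVec w₁) +
            (herm w₁ (dualSpinor w₂) + braket w₂ (h.mulVec z')) := by ring
      rw [e1, Complex.exp_add]
      have e3 : Complex.exp (-herm w₂ w₂) *
          Complex.exp (herm w₁ (dualSpinor w₂) + braket w₂ (h.mulVec z'))
          = Complex.exp
            ((-(conj (w₂ 0) * w₂ 0) + (conj (w₁ 1) * conj (w₂ 0) + (h.mulVec z') 1 * w₂ 0)) +
             (-(conj (w₂ 1) * w₂ 1) +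
               (-(conj (w₁ 0)) * conj (w₂ 1) + -((h.mulVec z') 0) * w₂ 1))) := by
        rw [← Complex.exp_add]
        congr 1
        simp only [herm, braket, dualSpinor, Matrix.cons_val_zero, Matrix.cons_val_one,
          Matrix.head_cons]
        ring
      rw [← e3, hC]
      ring
    simp only [hpt]
    rw [MeasureTheory.integral_const_mul]
    have hG := gauss2 ![conj (w₁ 1), -(conj (w₁ 0))] ![(h.mulVec z') 1, -((h.mulVec z') 0)]
    simp only [Matrix.cons_val_zero, Matrix.cons_val_one, Matrix.head_cons] at hG
    rw [hG, hC]
    rw [show (((Real.pi : ℂ)) ^ 2)⁻¹ * Complex.exp (-herm w₁ w₁) *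
        Complex.exp (braket z (g.mulVec w₁)) * (((Real.pi : ℂ)) ^ 2)⁻¹ *
        ((Real.pi : ℂ) ^ 2 * Complex.exp
          (conj (w₁ 1) * (h.mulVec z') 1 + -(conj (w₁ 0)) * -((h.mulVec z') 0)))
        = (((Real.pi : ℂ)) ^ 2)⁻¹ * (Complex.exp (-herm w₁ w₁) *
            Complex.exp (braket z (g.mulVec w₁)) * Complex.exp
            (conj (w₁ 1) * (h.mulVec z') 1 + -(conj (w₁ 0)) * -((h.mulVec z') 0)))
      from by field_simp]
    rw [← Complex.exp_add, ← Complex.exp_add]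
    congr 1
    simp only [herm, braket, hb0, hb1, Matrix.mulVec, dotProduct, Fin.sum_univ_two]
    ring
  simp only [inner]
  rw [MeasureTheory.integral_const_mul]
  have hG := gauss2 (h.mulVec z') ![b0, b1]
  simp only [Matrix.cons_val_zero, Matrix.cons_val_one, Matrix.head_cons] at hG
  rw [hG, ← mul_assoc, inv_mul_cancel₀ hπ2, one_mul]
  congr 1
  simp only [braket, hb0, hb1, Matrix.mulVec, dotProduct, Matrix.mul_apply,
    Fin.sum_univ_two]
  ring
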